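/- The two-dimensional Euler–Poisson expression E has the required affine shape with self-adjoint coefficients: define for v ∈ ℝ² the matrices 𝒜_{ab}(v) = ε_{ab}·(1 + ‖v‖²)^{−3/2} (where ε₁₂ = 1 = −ε₂₁, ε₁₁ = ε₂₂ = 0) and B_{ab}(v) = m·((1 + ‖v‖²)δ_{ab} − v_a v_b)·(1 + ‖v‖²)^{−3/2}, and c(v) = 0. Then (i) for all v, v′, v″ ∈ ℝ², E(v, v′, v″) = 𝒜(v)·v″ + ((v′·∂_v)𝒜)(v)·v′ + B(v)·v′ + c(v), where ((v′·∂_v)𝒜)_{ab} = Σ_c v′^c·∂𝒜_{ab}/∂v^c; and (ii) these coefficients satisfy the self-adjointness (Helmholtz-type) conditions, which for t- and x-independent coefficients reduce to: 𝒜 is skew-symmetric, B is symmetric, and ∂B_{bc}/∂v_a = ∂B_{ac}/∂v_b for all a, b, c ∈ {1, 2}. -/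

import Mathlib

noncomputable section
open RealInnerProductSpace

/-- Two-dimensional Euclidean space. -/
abbrev E2 := EuclideanSpace ℝ (Fin 2)

/-- The duality operation ∗(w₁, w₂) = (−w₂, w₁) on ℝ². -/
def star2 (w : E2) : E2 :=
  (WithLp.equiv 2 (Fin 2 → ℝ)).symm ![-(w 1), w 0]

/-- The two-dimensional Euler–Poisson expression
E(v, v′, v″) = −(∗v″)/(1 + ‖v‖²)^{3/2} + 3(v′·v)(∗v′)/(1 + ‖v‖²)^{5/2}
+ m((1 + ‖v‖²)v′ − (v′·v)v)/(1 + ‖v‖²)^{3/2}. -/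
def EP2d (m : ℝ) (v v' v'' : E2) : E2 :=
  -(((1 + ‖v‖ ^ 2) ^ ((3 : ℝ) / 2))⁻¹ • star2 v'')
    + (3 * ⟪v', v⟫ / (1 + ‖v‖ ^ 2) ^ ((5 : ℝ) / 2)) • star2 v'
    + (m / (1 + ‖v‖ ^ 2) ^ ((3 : ℝ) / 2)) • ((1 + ‖v‖ ^ 2) • v' - ⟪v', v⟫ • v)

/-- The skew-symmetric Levi-Civita symbol ε on ℝ², with ε₁₂ = 1 = −ε₂₁. -/
def eps : Fin 2 → Fin 2 → ℝ := ![![0, 1], ![-1, 0]]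

/-- The matrix 𝒜_{ab}(v) = ε_{ab}(1 + ‖v‖²)^{−3/2}. -/
def Acoef (v : E2) (a b : Fin 2) : ℝ :=
  eps a b * (1 + ‖v‖ ^ 2) ^ (-(3 : ℝ) / 2)

/-- The matrix B_{ab}(v) = m((1 + ‖v‖²)δ_{ab} − v_a v_b)(1 + ‖v‖²)^{−3/2}. -/
def Bcoef (m : ℝ) (v : E2) (a b : Fin 2) : ℝ :=
  m * ((1 + ‖v‖ ^ 2) * (if a = b then (1 : ℝ) else 0) - v a * v b)
    * (1 + ‖v‖ ^ 2) ^ (-(3 : ℝ) / 2)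


theorem fderivA (v u : E2) (c : ℝ) :
    fderiv ℝ (fun w : E2 => c * (1 + ‖w‖^2) ^ (-(3:ℝ)/2)) v u
      = c * ((-(3:ℝ)/2) * (1 + ‖v‖^2) ^ (-(3:ℝ)/2 - 1) * (2 * ⟪v, u⟫)) := by
  have ht : (0:ℝ) < 1 + ‖v‖^2 := by positivity
  have h := ((((hasFDerivAt_id v).norm_sq).const_add 1).rpow_const
      (p := -(3:ℝ)/2) (Or.inl ht.ne')).const_mul c
  simp only [id_eq] at h
  rw [h.fderiv]
  simp [two_smul]
  ring

theorem fderivB (v u : E2) (m δ : ℝ) (b c : Fin 2) :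
    fderiv ℝ (fun w : E2 => m * ((1 + ‖w‖^2) * δ - w b * w c) * (1 + ‖w‖^2) ^ (-(3:ℝ)/2)) v u
      = (m * ((2 * ⟪v, u⟫) * δ - (u b * v c + v b * u c))) * (1 + ‖v‖^2) ^ (-(3:ℝ)/2)
        + (m * ((1 + ‖v‖^2) * δ - v b * v c)) * ((-(3:ℝ)/2) * (1 + ‖v‖^2) ^ (-(3:ℝ)/2 - 1) * (2 * ⟪v, u⟫)) := by
  have ht : (0:ℝ) < 1 + ‖v‖^2 := by positivity
  have hG := ((hasFDerivAt_id v).norm_sq).const_add 1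
  have hb := (EuclideanSpace.proj (𝕜 := ℝ) b).hasFDerivAt (x := v)
  have hc := (EuclideanSpace.proj (𝕜 := ℝ) c).hasFDerivAt (x := v)
  have h := (((hG.mul_const δ).sub (hb.mul hc)).const_mul m).mul
    (hG.rpow_const (p := -(3:ℝ)/2) (Or.inl ht.ne'))
  simp only [id_eq, PiLp.proj_apply] at h
  have h' : HasFDerivAt (fun w : E2 => m * ((1 + ‖w‖^2) * δ - w b * w c) * (1 + ‖w‖^2) ^ (-(3:ℝ)/2)) _ v := h
  rw [h'.fderiv]
  simp [two_smul]
  ring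

/-- the two-dimensional Euler–Poisson expression E has the affine shape
E = 𝒜·v″ + ((v′·∂_v)𝒜)·v′ + B·v′ + c with c = 0, where 𝒜 is skew-symmetric, B is
symmetric, and ∂B_{bc}/∂v_a = ∂B_{ac}/∂v_b (the Helmholtz self-adjointness
conditions for t- and x-independent coefficients). -/
theorem EP2d_affine_shape_and_selfadjointness (m : ℝ) :
    (∀ (v v' v'' : E2) (a : Fin 2),
      EP2d m v v' v'' a
        = (∑ b : Fin 2, Acoef v a b * v'' b)
          + (∑ b : Fin 2, (fderiv ℝ (fun w : E2 => Acoef w a b) v v') * v' b)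
          + (∑ b : Fin 2, Bcoef m v a b * v' b) + 0) ∧
    (∀ (v : E2) (a b : Fin 2), Acoef v a b = -Acoef v b a) ∧
    (∀ (v : E2) (a b : Fin 2), Bcoef m v a b = Bcoef m v b a) ∧
    (∀ (v : E2) (a b c : Fin 2),
      fderiv ℝ (fun w : E2 => Bcoef m w b c) v (EuclideanSpace.single a 1)
        = fderiv ℝ (fun w : E2 => Bcoef m w a c) v (EuclideanSpace.single b 1)) := by
  refine ⟨?_, ?_, ?_, ?_⟩
  · intro v v' v'' a
    have ht : (0:ℝ) < 1 + ‖v‖^2 := by positivity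
    have h32 : (0:ℝ) < (1 + ‖v‖^2) ^ ((3:ℝ)/2) := Real.rpow_pos_of_pos ht _
    have h52 : (0:ℝ) < (1 + ‖v‖^2) ^ ((5:ℝ)/2) := Real.rpow_pos_of_pos ht _
    have hAB : (1 + ‖v‖^2) ^ ((5:ℝ)/2) = (1 + ‖v‖^2) ^ ((3:ℝ)/2) * (1 + ‖v‖^2) := by
      rw [show ((5:ℝ)/2) = (3:ℝ)/2 + 1 by norm_num, Real.rpow_add ht, Real.rpow_one]
    simp only [Acoef, Fin.sum_univ_two]
    rw [fderivA v v' (eps a 0), fderivA v v' (eps a 1)]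
    have hneg : (1 + ‖v‖^2) ^ (-(3:ℝ)/2) = ((1 + ‖v‖^2) ^ ((3:ℝ)/2))⁻¹ := by
      rw [neg_div, Real.rpow_neg ht.le]
    have hneg2 : (1 + ‖v‖^2) ^ (-(3:ℝ)/2 - 1) = ((1 + ‖v‖^2) ^ ((5:ℝ)/2))⁻¹ := by
      rw [show (-(3:ℝ)/2 - 1) = -((5:ℝ)/2) by norm_num, Real.rpow_neg ht.le]
    fin_cases a <;>
      simp [EP2d, star2, Bcoef, eps, PiLp.inner_apply, Fin.sum_univ_two,
        WithLp.equiv_symm_apply, PiLp.toLp_apply] <;>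
      rw [hneg, hneg2, hAB] <;>
      field_simp <;>
      ring
  · intro v a b
    fin_cases a <;> fin_cases b <;> simp [Acoef, eps]
  · intro v a b
    fin_cases a <;> fin_cases b <;>
      simp only [Bcoef, Fin.ext_iff, Fin.val_zero, Fin.val_one] <;> norm_num [mul_comm]
  · intro v a b c
    have ht : (0:ℝ) < 1 + ‖v‖^2 := by positivity
    have hsub : (1 + ‖v‖^2) ^ (-(3:ℝ)/2 - 1) = (1 + ‖v‖^2) ^ (-(3:ℝ)/2) / (1 + ‖v‖^2) := by
      rw [Real.rpow_sub ht, Real.rpow_one]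
    simp only [Bcoef]
    rw [fderivB v _ m _ b c, fderivB v _ m _ a c, hsub]
    have hs : ∀ (i j : Fin 2), (EuclideanSpace.single i (1:ℝ)) j = if j = i then 1 else 0 :=
      fun i j => EuclideanSpace.single_apply i 1 j
    have hinner : ∀ i : Fin 2, ⟪v, EuclideanSpace.single i (1:ℝ)⟫ = v i := by
      intro i; simp [EuclideanSpace.inner_single_right]
    rw [hinner, hinner, hs, hs, hs, hs]
    fin_cases a <;> fin_cases b <;> fin_cases c <;>
      simp <;> field_simp <;> ring
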